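/- arXiv:1709.04431 — 3 statements merged into one kernel-verified Lean document; each statement's English description precedes it below -/
import Mathlib

section
/- Let X be a finite pure n-dimensional weighted simplicial complex. For every 0 ≤ k ≤ n−1 and every φ, ψ ∈ C^k(X,ℝ): k! ⟨dφ, dψ⟩ = Σ_{τ ∈ Σ(k−1)} ( ⟨d_τ φ_τ, d_τ ψ_τ⟩ − (k/(k+1)) ⟨φ_τ, ψ_τ⟩ ), where d_τ denotes the differential of the link X_τ and the inner products on the right-hand side are taken in X_τ. -/
open Finset

variable {V : Type} [Fintype V] [DecidableEq V]

/-- A finite abstract simplicial complex on the vertex type `V`. -/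
structure SComplex (V : Type) [Fintype V] [DecidableEq V] where
  faces : Finset (Finset V)
  empty_mem : ∅ ∈ faces
  down_closed : ∀ s ∈ faces, ∀ t, t ⊆ s → t ∈ faces

namespace SComplex

/-- `X` is pure `n`-dimensional: every face is contained in an `n`-dimensional face. -/
def Pure (X : SComplex V) (n : ℕ) : Prop :=
  (∀ s ∈ X.faces, s.card ≤ n + 1) ∧
    ∀ s ∈ X.faces, ∃ t ∈ X.faces, s ⊆ t ∧ t.card = n + 1

/-- `σ` is an ordered simplex with `j` vertices (an element of `Σ(j-1)`). -/
def IsOSimp (X : SComplex V) {j : ℕ} (σ : Fin j → V) : Prop :=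
  Function.Injective σ ∧ Finset.image σ Finset.univ ∈ X.faces

instance {j : ℕ} (X : SComplex V) (σ : Fin j → V) : Decidable (X.IsOSimp σ) := by
  unfold IsOSimp; infer_instance

/-- A balanced, strictly positive weight function on the simplices of `X`. -/
def IsBalanced (X : SComplex V) (n : ℕ) (m : Finset V → ℝ) : Prop :=
  (∀ s ∈ X.faces, 0 < m s) ∧
    ∀ s ∈ X.faces, s.card ≤ n →
      m s = ∑ t ∈ X.faces.filter fun t => s ⊆ t ∧ t.card = s.card + 1, m t

/-- The weight of an ordered tuple (zero off the ordered simplices). -/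
noncomputable def wt (X : SComplex V) (m : Finset V → ℝ) {j : ℕ} (σ : Fin j → V) : ℝ :=
  if X.IsOSimp σ then m (Finset.image σ Finset.univ) else 0

/-- `φ` is a `j`-vertex form, i.e. an element of `C^{j-1}(X,ℝ)`:
antisymmetric and supported on the ordered simplices. -/
def IsForm (X : SComplex V) (j : ℕ) (φ : (Fin j → V) → ℝ) : Prop :=
  (∀ (σ : Fin j → V) (π : Equiv.Perm (Fin j)),
      φ (σ ∘ π) = ((Equiv.Perm.sign π : ℤ) : ℝ) * φ σ) ∧
    ∀ σ : Fin j → V, ¬X.IsOSimp σ → φ σ = 0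

/-- The inner product on `j`-vertex forms (`C^{j-1}(X,ℝ)`). -/
noncomputable def innerF (X : SComplex V) (m : Finset V → ℝ) (j : ℕ)
    (φ ψ : (Fin j → V) → ℝ) : ℝ :=
  ∑ σ : Fin j → V, X.wt m σ / (Nat.factorial j : ℝ) * (φ σ * ψ σ)

/-- The sum of a quantity over all ordered simplices with `j` vertices. -/
noncomputable def sumOSimp (X : SComplex V) (j : ℕ) (F : (Fin j → V) → ℝ) : ℝ :=
  ∑ σ : Fin j → V, if X.IsOSimp σ then F σ else 0

/-- The simplicial differential `d`. -/
def dOp {j : ℕ} (φ : (Fin j → V) → ℝ) : (Fin (j + 1) → V) → ℝ :=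
  fun σ => ∑ i : Fin (j + 1), (-1 : ℝ) ^ (i : ℕ) * φ (σ ∘ i.succAbove)

/-- The codifferential `δ` (the adjoint of `d`). -/
noncomputable def deltaOp (X : SComplex V) (m : Finset V → ℝ) {j : ℕ}
    (φ : (Fin (j + 1) → V) → ℝ) : (Fin j → V) → ℝ :=
  fun τ => ∑ v : V, X.wt m (Fin.cons v τ) / X.wt m τ * φ (Fin.cons v τ)

/-- The upper Laplacian `Δ⁺` on `j`-vertex forms (`C^{j-1}`). -/
noncomputable def lapPlus (X : SComplex V) (m : Finset V → ℝ) (j : ℕ)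
    (φ : (Fin j → V) → ℝ) : (Fin j → V) → ℝ :=
  X.deltaOp m (dOp φ)

/-- The lower Laplacian `Δ⁻` on `(j+1)`-vertex forms (`C^j`). -/
noncomputable def lapMinus (X : SComplex V) (m : Finset V → ℝ) (j : ℕ)
    (φ : (Fin (j + 1) → V) → ℝ) : (Fin (j + 1) → V) → ℝ :=
  dOp (X.deltaOp m φ)

/-- The set of eigenvalues of `Δ⁺` on `j`-vertex forms. -/
def specLapPlus (X : SComplex V) (m : Finset V → ℝ) (j : ℕ) : Set ℝ :=
  {μ | ∃ φ : (Fin j → V) → ℝ, X.IsForm j φ ∧ φ ≠ 0 ∧ X.lapPlus m j φ = μ • φ}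

/-- The set of eigenvalues of `Δ⁻` on `(j+1)`-vertex forms (`C^j`). -/
def specLapMinus (X : SComplex V) (m : Finset V → ℝ) (j : ℕ) : Set ℝ :=
  {μ | ∃ φ : (Fin (j + 1) → V) → ℝ, X.IsForm (j + 1) φ ∧ φ ≠ 0 ∧ X.lapMinus m j φ = μ • φ}

/-- The link of a face `s`. -/
def link (X : SComplex V) (s : Finset V) : SComplex V where
  faces := insert ∅ (X.faces.filter fun t => Disjoint s t ∧ s ∪ t ∈ X.faces)
  empty_mem := Finset.mem_insert_self _ _
  down_closed := by
    intro a ha t hts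
    rcases Finset.mem_insert.mp ha with h | h
    · refine Finset.mem_insert.mpr (Or.inl ?_)
      subst h; exact Finset.subset_empty.mp hts
    · rw [Finset.mem_filter] at h
      refine Finset.mem_insert.mpr (Or.inr (Finset.mem_filter.mpr
        ⟨X.down_closed a h.1 t hts, Disjoint.mono_right hts h.2.1,
          X.down_closed _ h.2.2 _ (Finset.union_subset_union (Finset.Subset.refl s) hts)⟩))

/-- The induced (balanced) weight on the link of `s`. -/
def linkWt (m : Finset V → ℝ) (s : Finset V) : Finset V → ℝ := fun t => m (s ∪ t)

/-- The graph given by the 1-skeleton of `X`. -/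
def skeleton (X : SComplex V) : SimpleGraph V where
  Adj u v := u ≠ v ∧ ({u, v} : Finset V) ∈ X.faces
  symm := ⟨by
    intro u v h
    exact ⟨h.1.symm, by rw [Finset.pair_comm]; exact h.2⟩⟩
  loopless := ⟨fun u h => h.1 rfl⟩

/-- The 1-skeleton of `X` is connected (on the vertices of `X`). -/
def SkelConnected (X : SComplex V) : Prop :=
  ∀ u v : V, ({u} : Finset V) ∈ X.faces → ({v} : Finset V) ∈ X.faces →
    X.skeleton.Reachable u v

/-- The 1-skeleton of `X` and the 1-skeletons of all links of `X` of dimension `> 0`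
are connected. -/
def AllLinksConnected (X : SComplex V) (n : ℕ) : Prop :=
  X.SkelConnected ∧ ∀ s ∈ X.faces, s.card < n → (X.link s).SkelConnected

/-- The localization `φ_τ ∈ C⁰(X_τ)` of a `(k+1)`-vertex form `φ` at an ordered
`k`-vertex simplex `τ`. -/
def localize {k : ℕ} (φ : (Fin (k + 1) → V) → ℝ) (τ : Fin k → V) : (Fin 1 → V) → ℝ :=
  fun σ => φ (Fin.append τ σ)

/-- The restriction of a cochain to the subcomplex `Y` (truncating off `Y`). -/
def restrict (Y : SComplex V) {j : ℕ} (φ : (Fin j → V) → ℝ) : (Fin j → V) → ℝ :=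
  fun σ => if Y.IsOSimp σ then φ σ else 0

/-- `S` is an `(n+1)`-partition of `X`: the vertices of `X` are partitioned into the
sides `S i`, and every edge joins two distinct sides. -/
def IsPartition (X : SComplex V) (n : ℕ) (S : Fin (n + 1) → Finset V) : Prop :=
  (∀ i, ∀ v ∈ S i, ({v} : Finset V) ∈ X.faces) ∧
    (∀ v : V, ({v} : Finset V) ∈ X.faces → ∃! i, v ∈ S i) ∧
    ∀ u v : V, u ≠ v → ({u, v} : Finset V) ∈ X.faces → ∀ i, u ∈ S i → v ∉ S i

/-- The side differential `d_{(k,j)}` with respect to the side `S`. -/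
def dSide (S : Finset V) {j : ℕ} (φ : (Fin j → V) → ℝ) : (Fin (j + 1) → V) → ℝ :=
  fun σ => ∑ i : Fin (j + 1),
    if σ i ∈ S then (-1 : ℝ) ^ (i : ℕ) * φ (σ ∘ i.succAbove) else 0

/-- The adjoint `δ_{(k,j)}` of the side differential. -/
noncomputable def deltaSide (X : SComplex V) (m : Finset V → ℝ) (S : Finset V) {j : ℕ}
    (φ : (Fin (j + 1) → V) → ℝ) : (Fin j → V) → ℝ :=
  fun τ => ∑ v ∈ S, X.wt m (Fin.cons v τ) / X.wt m τ * φ (Fin.cons v τ)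

/-- The side lower Laplacian `Δ⁻_{(k,j)}` on `(j+1)`-vertex forms (`C^j`). -/
noncomputable def lapMinusSide (X : SComplex V) (m : Finset V → ℝ) (S : Finset V) (j : ℕ)
    (φ : (Fin (j + 1) → V) → ℝ) : (Fin (j + 1) → V) → ℝ :=
  dSide S (X.deltaSide m S φ)

end SComplex

open SComplex

section Aux
set_option linter.unusedSectionVars false

variable (X : SComplex V) (m : Finset V → ℝ)

lemma aux_mem_image {j : ℕ} (σ : Fin j → V) (a : V) :
    a ∈ Finset.image σ Finset.univ ↔ a ∈ Set.range σ := by simp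

lemma aux_image_congr {j : ℕ} {σ₁ σ₂ : Fin j → V} (h : Set.range σ₁ = Set.range σ₂) :
    Finset.image σ₁ Finset.univ = Finset.image σ₂ Finset.univ := by
  ext a; rw [aux_mem_image, aux_mem_image, h]

lemma aux_wt_congr {j : ℕ} {σ₁ σ₂ : Fin j → V}
    (hr : Set.range σ₁ = Set.range σ₂)
    (hi : Function.Injective σ₁ ↔ Function.Injective σ₂) :
    X.wt m σ₁ = X.wt m σ₂ := by
  have him := aux_image_congr hr
  unfold SComplex.wt
  split_ifs with h1 h2 h2
  · rw [him]
  · exact absurd ⟨hi.mp h1.1, him ▸ h1.2⟩ h2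
  · exact absurd ⟨hi.mpr h2.1, him.symm ▸ h2.2⟩ h1
  · rfl

lemma aux_wt_perm {j : ℕ} (σ : Fin j → V) (π : Equiv.Perm (Fin j)) :
    X.wt m (σ ∘ π) = X.wt m σ :=
  aux_wt_congr X m (π.surjective.range_comp σ) (π.injective_comp σ)

lemma aux_insertNth_eq {j : ℕ} (i : Fin (j + 1)) (v : V) (η : Fin j → V) :
    i.insertNth v η = Fin.cons v η ∘ i.cycleRange := by
  funext x
  rcases eq_or_ne x i with rfl | hx
  · simp
  · obtain ⟨z, rfl⟩ := Fin.exists_succAbove_eq hx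
    simp [Function.comp]

lemma aux_wt_insertNth {j : ℕ} (i : Fin (j + 1)) (v : V) (η : Fin j → V) :
    X.wt m (i.insertNth v η) = X.wt m (Fin.cons v η) := by
  rw [aux_insertNth_eq]; exact aux_wt_perm X m _ _

lemma aux_range_insertNth {j : ℕ} (i : Fin (j + 1)) (v : V) (η : Fin j → V) :
    Set.range (i.insertNth v η) = insert v (Set.range η) := by
  rw [aux_insertNth_eq, (i.cycleRange).surjective.range_comp, Fin.range_cons]

lemma aux_inj_insertNth {j : ℕ} (i : Fin (j + 1)) (v : V) (η : Fin j → V) :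
    Function.Injective (i.insertNth v η) ↔ v ∉ Set.range η ∧ Function.Injective η := by
  rw [aux_insertNth_eq, Equiv.injective_comp, Fin.cons_injective_iff]

lemma aux_range_snoc {j : ℕ} (η : Fin j → V) (v : V) :
    Set.range (Fin.snoc η v) = insert v (Set.range η) := by
  rw [← Fin.insertNth_last']; exact aux_range_insertNth _ _ _

lemma aux_inj_snoc {j : ℕ} (η : Fin j → V) (v : V) :
    Function.Injective (Fin.snoc η v : Fin (j+1) → V) ↔ v ∉ Set.range η ∧ Function.Injective η := by
  rw [← Fin.insertNth_last']; exact aux_inj_insertNth _ _ _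

lemma aux_wt_snoc {j : ℕ} (η : Fin j → V) (v : V) :
    X.wt m (Fin.snoc η v) = X.wt m (Fin.cons v η) := by
  rw [← Fin.insertNth_last']; exact aux_wt_insertNth X m _ _ _

lemma aux_form_insertNth {j : ℕ} {φ : (Fin (j + 1) → V) → ℝ} (hφ : X.IsForm (j + 1) φ)
    (i : Fin (j + 1)) (v : V) (η : Fin j → V) :
    φ (i.insertNth v η) = (-1 : ℝ) ^ (i : ℕ) * φ (Fin.cons v η) := by
  rw [aux_insertNth_eq, hφ.1 (Fin.cons v η) i.cycleRange, Fin.sign_cycleRange]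
  norm_num

lemma aux_form_snoc {j : ℕ} {φ : (Fin (j + 1) → V) → ℝ} (hφ : X.IsForm (j + 1) φ)
    (η : Fin j → V) (v : V) :
    φ (Fin.snoc η v) = (-1 : ℝ) ^ j * φ (Fin.cons v η) := by
  rw [← Fin.insertNth_last', aux_form_insertNth X hφ, Fin.val_last]

lemma aux_image_cons {j : ℕ} (v : V) (η : Fin j → V) :
    Finset.image (Fin.cons v η : Fin (j+1) → V) Finset.univ = insert v (Finset.image η Finset.univ) := by
  ext a
  rw [Finset.mem_insert, aux_mem_image, aux_mem_image, Fin.range_cons, Set.mem_insert_iff]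

lemma aux_osimp_cons {j : ℕ} {v : V} {η : Fin j → V} (h : X.IsOSimp (Fin.cons v η)) :
    X.IsOSimp η := by
  obtain ⟨hinj, hface⟩ := h
  rw [Fin.cons_injective_iff] at hinj
  refine ⟨hinj.2, X.down_closed _ hface _ ?_⟩
  rw [aux_image_cons]; exact Finset.subset_insert _ _

lemma aux_wt_cons_zero {j : ℕ} {η : Fin j → V} (h : ¬ X.IsOSimp η) (v : V) :
    X.wt m (Fin.cons v η) = 0 := by
  unfold SComplex.wt
  rw [if_neg (fun hc => h (aux_osimp_cons X hc))]

lemma aux_wt_cons_congr {j : ℕ} (v : V) (μ₁ μ₂ : Fin j → V)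
    (hr : Set.range μ₁ = Set.range μ₂)
    (hi : Function.Injective μ₁ ↔ Function.Injective μ₂) :
    X.wt m (Fin.cons v μ₁) = X.wt m (Fin.cons v μ₂) :=
  aux_wt_congr X m (by rw [Fin.range_cons, Fin.range_cons, hr])
    (by rw [Fin.cons_injective_iff, Fin.cons_injective_iff, hr, hi])

lemma aux_wt_ss {j : ℕ} (τ : Fin j → V) (u v : V) :
    X.wt m (Fin.snoc (Fin.snoc τ u) v) = X.wt m (Fin.cons v (Fin.cons u τ)) := by
  rw [aux_wt_snoc]
  exact aux_wt_cons_congr X m v (Fin.snoc τ u) (Fin.cons u τ)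
    (by rw [aux_range_snoc, Fin.range_cons])
    (by rw [aux_inj_snoc, Fin.cons_injective_iff])

lemma aux_wt_cs {j : ℕ} (τ : Fin j → V) (u v : V) :
    X.wt m (Fin.snoc (Fin.snoc τ u) v) = X.wt m (Fin.cons u (Fin.snoc τ v)) := by
  refine aux_wt_congr X m ?_ ?_
  · rw [aux_range_snoc, aux_range_snoc, Fin.range_cons, aux_range_snoc, Set.insert_comm]
  · simp only [aux_inj_snoc, Fin.cons_injective_iff, aux_range_snoc, Fin.range_cons,
      Set.mem_insert_iff]
    tauto

lemma aux_wt_swap {j : ℕ} (τ : Fin j → V) (u v : V) :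
    X.wt m (Fin.snoc (Fin.snoc τ u) v) = X.wt m (Fin.snoc (Fin.snoc τ v) u) := by
  refine aux_wt_congr X m ?_ ?_
  · rw [aux_range_snoc, aux_range_snoc, aux_range_snoc, aux_range_snoc, Set.insert_comm]
  · simp only [aux_inj_snoc, aux_range_snoc, Set.mem_insert_iff]
    tauto

lemma aux_val_succAbove {j : ℕ} (p : Fin (j + 1)) (q : Fin j) :
    ((p.succAbove q : Fin (j + 1)) : ℕ) = if (q : ℕ) < (p : ℕ) then (q : ℕ) else (q : ℕ) + 1 := by
  unfold Fin.succAbove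
  split_ifs with h1 h2 h2 <;> simp_all [Fin.lt_def] <;> omega

lemma aux_braid {j : ℕ} {i jj : Fin (j + 2)} {i' j' : Fin (j + 1)}
    (h1 : i.succAbove j' = jj) (h2 : jj.succAbove i' = i) (q : Fin j) :
    jj.succAbove (i'.succAbove q) = i.succAbove (j'.succAbove q) := by
  have h1v := congrArg Fin.val h1
  have h2v := congrArg Fin.val h2
  simp only [aux_val_succAbove] at h1v h2v
  apply Fin.val_injective
  simp only [aux_val_succAbove]
  have hq := q.is_lt
  split_ifs at h1v h2v ⊢ <;> omega

lemma aux_sign_braid {j : ℕ} {i jj : Fin (j + 2)} {i' j' : Fin (j + 1)}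
    (h1 : i.succAbove j' = jj) (h2 : jj.succAbove i' = i) :
    (-1 : ℝ) ^ ((i : ℕ) + (jj : ℕ) + (i' : ℕ) + (j' : ℕ)) = -1 := by
  have h1v := congrArg Fin.val h1
  have h2v := congrArg Fin.val h2
  simp only [aux_val_succAbove] at h1v h2v
  have hodd : ((i : ℕ) + (jj : ℕ) + (i' : ℕ) + (j' : ℕ)) % 2 = 1 := by
    split_ifs at h1v h2v <;> omega
  exact Odd.neg_one_pow (Nat.odd_iff.mpr hodd)

lemma aux_comp_self {j : ℕ} (i : Fin (j + 1)) (v : V) (η : Fin j → V) :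
    (i.insertNth v η : Fin (j+1) → V) ∘ i.succAbove = η := by
  funext p; simp

lemma aux_comp_succAbove {j : ℕ} {i jj : Fin (j + 2)} {i' j' : Fin (j + 1)}
    (h1 : i.succAbove j' = jj) (h2 : jj.succAbove i' = i)
    (v u : V) (τ : Fin j → V) :
    (i.insertNth v (j'.insertNth u τ) : Fin (j+2) → V) ∘ jj.succAbove = i'.insertNth v τ := by
  funext p
  simp only [Function.comp_apply]
  rcases eq_or_ne p i' with rfl | hp
  · rw [h2]; simp
  · obtain ⟨q, rfl⟩ := Fin.exists_succAbove_eq hp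
    rw [aux_braid h1 h2]; simp

lemma aux_sum_wt_cons {n : ℕ} (hm : X.IsBalanced n m) {j : ℕ} {η : Fin (j + 1) → V}
    (hη : X.IsOSimp η) (hcard : j + 1 ≤ n) :
    ∑ v : V, X.wt m (Fin.cons v η) = X.wt m η := by
  set s := Finset.image η Finset.univ with hs
  have hcards : s.card = j + 1 := by
    rw [hs, Finset.card_image_of_injective _ hη.1, Finset.card_univ, Fintype.card_fin]
  have hws : X.wt m η = m s := by unfold SComplex.wt; rw [if_pos hη]
  have hsum : ∀ v : V, X.wt m (Fin.cons v η) =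
      if v ∉ s ∧ insert v s ∈ X.faces then m (insert v s) else 0 := by
    intro v
    have him : Finset.image (Fin.cons v η : Fin (j+1+1) → V) Finset.univ = insert v s :=
      aux_image_cons v η
    unfold SComplex.wt
    split_ifs with h1 h2 h2
    · rw [him]
    · exfalso
      obtain ⟨hinj, hf⟩ := h1
      rw [Fin.cons_injective_iff] at hinj
      exact h2 ⟨by rw [hs, aux_mem_image]; exact hinj.1, him ▸ hf⟩
    · exfalso
      refine h1 ⟨Fin.cons_injective_iff.mpr ⟨?_, hη.1⟩, him.symm ▸ h2.2⟩
      rw [← aux_mem_image, ← hs]; exact h2.1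
    · rfl
  calc ∑ v : V, X.wt m (Fin.cons v η)
      = ∑ v ∈ Finset.univ.filter (fun v => v ∉ s ∧ insert v s ∈ X.faces), m (insert v s) := by
        rw [Finset.sum_filter]
        exact Finset.sum_congr rfl (fun v _ => hsum v)
    _ = ∑ t ∈ X.faces.filter (fun t => s ⊆ t ∧ t.card = s.card + 1), m t := by
        refine Finset.sum_bij (fun v _ => insert v s) ?_ ?_ ?_ ?_
        · intro v hv
          rw [Finset.mem_filter] at hv ⊢
          obtain ⟨-, hvs, hins⟩ := hv
          exact ⟨hins, Finset.subset_insert _ _, by rw [Finset.card_insert_of_notMem hvs]⟩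
        · intro v hv w hw he
          rw [Finset.mem_filter] at hv hw
          have he' : insert v s = insert w s := he
          have : v ∈ insert w s := he' ▸ Finset.mem_insert_self v s
          rcases Finset.mem_insert.mp this with h | h
          · exact h
          · exact absurd h hv.2.1
        · intro t ht
          rw [Finset.mem_filter] at ht
          obtain ⟨htf, hst, hcardt⟩ := ht
          have hss : s ⊂ t := hst.ssubset_of_ne (by
            intro h; rw [h] at hcardt; omega)
          obtain ⟨v, hvt, hvs⟩ := Finset.exists_of_ssubset hss
          have : insert v s = t := Finset.eq_of_subset_of_card_le
            (Finset.insert_subset hvt hst)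
            (by rw [Finset.card_insert_of_notMem hvs]; omega)
          refine ⟨v, Finset.mem_filter.mpr ⟨Finset.mem_univ v, hvs, this ▸ htf⟩, this⟩
        · intro v _; rfl
    _ = m s := (hm.2 s hη.2 (by omega)).symm
    _ = X.wt m η := hws.symm

lemma aux_sum3 {j : ℕ} (f : V → V → (Fin j → V) → ℝ) :
    ∑ v : V, ∑ u : V, ∑ τ : Fin j → V, f v u τ
      = ∑ τ : Fin j → V, ∑ u : V, ∑ v : V, f v u τ := by
  calc ∑ v : V, ∑ u : V, ∑ τ : Fin j → V, f v u τ
      = ∑ u : V, ∑ v : V, ∑ τ : Fin j → V, f v u τ := Finset.sum_comm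
    _ = ∑ u : V, ∑ τ : Fin j → V, ∑ v : V, f v u τ :=
        Finset.sum_congr rfl (fun u _ => Finset.sum_comm)
    _ = ∑ τ : Fin j → V, ∑ u : V, ∑ v : V, f v u τ := Finset.sum_comm

lemma aux_antisym_sum (E : V → V → ℝ) (hE : ∀ u v, E u v = - E v u) :
    ∑ u : V, ∑ v : V, E u v = 0 := by
  have h : ∑ u : V, ∑ v : V, E u v = ∑ u : V, ∑ v : V, - E u v := by
    rw [Finset.sum_comm]
    exact Finset.sum_congr rfl (fun v _ => Finset.sum_congr rfl (fun u _ => hE u v))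
  simp only [Finset.sum_neg_distrib] at h
  linarith

lemma aux_sum_rot {α β γ : Type} [Fintype α] [Fintype β] [Fintype γ] (f : α → β → γ → ℝ) :
    ∑ x : α, ∑ y : β, ∑ z : γ, f x y z = ∑ y : β, ∑ z : γ, ∑ x : α, f x y z := by
  calc ∑ x : α, ∑ y : β, ∑ z : γ, f x y z
      = ∑ y : β, ∑ x : α, ∑ z : γ, f x y z := Finset.sum_comm
    _ = ∑ y : β, ∑ z : γ, ∑ x : α, f x y z :=
        Finset.sum_congr rfl (fun y _ => Finset.sum_comm)

lemma aux_sum_rev {α β γ : Type} [Fintype α] [Fintype β] [Fintype γ] (f : α → β → γ → ℝ) :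
    ∑ x : α, ∑ y : β, ∑ z : γ, f x y z = ∑ z : γ, ∑ y : β, ∑ x : α, f x y z := by
  calc ∑ x : α, ∑ y : β, ∑ z : γ, f x y z
      = ∑ y : β, ∑ z : γ, ∑ x : α, f x y z := aux_sum_rot f
    _ = ∑ z : γ, ∑ y : β, ∑ x : α, f x y z := Finset.sum_comm

noncomputable def SBp (X : SComplex V) (m : Finset V → ℝ) (k : ℕ)
    (φ ψ : (Fin (k + 1) → V) → ℝ) : ℝ :=
  ∑ η : Fin (k + 1) → V, ∑ v : V, X.wt m (Fin.cons v η) * (φ η * ψ η)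

noncomputable def SAq (X : SComplex V) (m : Finset V → ℝ) (k : ℕ)
    (φ ψ : (Fin (k + 1) → V) → ℝ) : ℝ :=
  ∑ τ : Fin k → V, ∑ u : V, ∑ v : V,
    X.wt m (Fin.cons v (Fin.cons u τ)) * (φ (Fin.cons u τ) * ψ (Fin.cons v τ))

noncomputable def SB0 (X : SComplex V) (m : Finset V → ℝ) (k : ℕ)
    (φ ψ : (Fin (k + 1) → V) → ℝ) : ℝ :=
  ∑ η : Fin (k + 1) → V, X.wt m η * (φ η * ψ η)

lemma aux_reindex {j : ℕ} (i : Fin (j + 1)) (F : (Fin (j + 1) → V) → ℝ) :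
    ∑ σ : Fin (j + 1) → V, F σ = ∑ v : V, ∑ η : Fin j → V, F (i.insertNth v η) := by
  calc ∑ σ : Fin (j + 1) → V, F σ
      = ∑ p : V × (Fin j → V), F (i.insertNth p.1 p.2) :=
        (Fintype.sum_equiv (Fin.insertNthEquiv (fun _ => V) i) _ _ (fun p => rfl)).symm
    _ = ∑ v : V, ∑ η : Fin j → V, F (i.insertNth v η) := Fintype.sum_prod_type _

lemma aux_reindex_snoc {j : ℕ} (F : (Fin (j + 1) → V) → ℝ) :
    ∑ η : Fin (j + 1) → V, F η = ∑ τ : Fin j → V, ∑ v : V, F (Fin.snoc τ v) := by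
  calc ∑ η : Fin (j + 1) → V, F η
      = ∑ p : V × (Fin j → V), F (Fin.snoc p.2 p.1) :=
        (Fintype.sum_equiv (Fin.snocEquiv (fun _ => V)) _ _ (fun p => rfl)).symm
    _ = ∑ v : V, ∑ τ : Fin j → V, F (Fin.snoc τ v) := Fintype.sum_prod_type _
    _ = ∑ τ : Fin j → V, ∑ v : V, F (Fin.snoc τ v) := Finset.sum_comm

lemma aux_key {k : ℕ} (φ ψ : (Fin (k + 1) → V) → ℝ)
    (hφ : X.IsForm (k + 1) φ) (hψ : X.IsForm (k + 1) ψ) (i j : Fin (k + 2)) :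
    ∑ σ : Fin (k + 2) → V, X.wt m σ *
        (((-1 : ℝ) ^ (i : ℕ) * φ (σ ∘ i.succAbove)) * ((-1 : ℝ) ^ (j : ℕ) * ψ (σ ∘ j.succAbove)))
      = if i = j then SBp X m k φ ψ else - SAq X m k φ ψ := by
  rcases eq_or_ne i j with rfl | hij
  · rw [if_pos rfl, aux_reindex i]
    unfold SBp
    rw [Finset.sum_comm]
    refine Finset.sum_congr rfl (fun η _ => Finset.sum_congr rfl (fun v _ => ?_))
    rw [aux_comp_self, aux_wt_insertNth]
    have hsq : (-1 : ℝ) ^ (i : ℕ) * (-1 : ℝ) ^ (i : ℕ) = 1 := by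
      rw [← pow_add]; exact Even.neg_one_pow ⟨(i : ℕ), rfl⟩
    linear_combination (X.wt m (Fin.cons v η) * (φ η * ψ η)) * hsq
  · rw [if_neg hij]
    obtain ⟨j', hj'⟩ := Fin.exists_succAbove_eq hij.symm
    obtain ⟨i', hi'⟩ := Fin.exists_succAbove_eq hij
    rw [aux_reindex i]
    have step : ∀ v : V,
        ∑ η : Fin (k + 1) → V, X.wt m (i.insertNth v η) *
            (((-1 : ℝ) ^ (i : ℕ) * φ ((i.insertNth v η) ∘ i.succAbove)) *
              ((-1 : ℝ) ^ (j : ℕ) * ψ ((i.insertNth v η) ∘ j.succAbove)))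
          = ∑ u : V, ∑ τ : Fin k → V,
              - (X.wt m (Fin.cons v (Fin.cons u τ)) * (φ (Fin.cons u τ) * ψ (Fin.cons v τ))) := by
      intro v
      rw [aux_reindex j']
      refine Finset.sum_congr rfl (fun u _ => Finset.sum_congr rfl (fun τ _ => ?_))
      rw [aux_comp_self, aux_comp_succAbove hj' hi']
      rw [aux_form_insertNth X hφ, aux_form_insertNth X hψ]
      rw [aux_wt_insertNth, aux_wt_cons_congr X m v (j'.insertNth u τ) (Fin.cons u τ)
        (by simp [aux_range_insertNth]; rfl) (by simp [aux_inj_insertNth, Fin.cons_injective_iff])]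
      have hs : (-1 : ℝ) ^ ((i : ℕ) + (j : ℕ) + (i' : ℕ) + (j' : ℕ)) = -1 := aux_sign_braid hj' hi'
      rw [pow_add, pow_add, pow_add] at hs
      linear_combination (X.wt m (Fin.cons v (Fin.cons u τ)) * (φ (Fin.cons u τ) * ψ (Fin.cons v τ))) * hs
    rw [Finset.sum_congr rfl (fun v _ => step v)]
    unfold SAq
    rw [aux_sum_rev (f := fun (v u : V) (τ : Fin k → V) =>
      - (X.wt m (Fin.cons v (Fin.cons u τ)) * (φ (Fin.cons u τ) * ψ (Fin.cons v τ))))]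
    simp [Finset.sum_neg_distrib]

lemma aux_lhs {k : ℕ} (φ ψ : (Fin (k + 1) → V) → ℝ)
    (hφ : X.IsForm (k + 1) φ) (hψ : X.IsForm (k + 1) ψ) :
    (Nat.factorial k : ℝ) * X.innerF m (k + 2) (dOp φ) (dOp ψ)
      = (1 / ((k : ℝ) + 1)) * SBp X m k φ ψ - SAq X m k φ ψ := by
  have hk1 : ((k : ℝ) + 1) ≠ 0 := by positivity
  have hk2 : ((k : ℝ) + 2) ≠ 0 := by positivity
  have hkf : (Nat.factorial k : ℝ) ≠ 0 := Nat.cast_ne_zero.mpr (Nat.factorial_ne_zero k)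
  have hfac : ((Nat.factorial (k + 2) : ℝ)) = ((k : ℝ) + 2) * ((k : ℝ) + 1) * (Nat.factorial k : ℝ) := by
    rw [Nat.factorial_succ, Nat.factorial_succ]; push_cast; ring
  unfold SComplex.innerF SComplex.dOp
  rw [Finset.mul_sum]
  have h1 : ∀ σ : Fin (k + 2) → V,
      (Nat.factorial k : ℝ) * (X.wt m σ / (Nat.factorial (k + 2) : ℝ) *
          ((∑ a : Fin (k + 2), (-1 : ℝ) ^ (a : ℕ) * φ (σ ∘ a.succAbove)) *
            (∑ b : Fin (k + 2), (-1 : ℝ) ^ (b : ℕ) * ψ (σ ∘ b.succAbove))))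
        = (1 / (((k : ℝ) + 1) * ((k : ℝ) + 2))) * ∑ a : Fin (k + 2), ∑ b : Fin (k + 2),
            X.wt m σ * (((-1 : ℝ) ^ (a : ℕ) * φ (σ ∘ a.succAbove)) *
              ((-1 : ℝ) ^ (b : ℕ) * ψ (σ ∘ b.succAbove))) := by
    intro σ
    rw [Finset.sum_mul_sum]
    simp only [Finset.mul_sum]
    refine Finset.sum_congr rfl (fun a _ => Finset.sum_congr rfl (fun b _ => ?_))
    rw [hfac]
    field_simp
  rw [Finset.sum_congr rfl (fun σ _ => h1 σ), ← Finset.mul_sum]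
  rw [aux_sum_rot (f := fun (σ : Fin (k + 2) → V) (a b : Fin (k + 2)) =>
    X.wt m σ * (((-1 : ℝ) ^ (a : ℕ) * φ (σ ∘ a.succAbove)) *
      ((-1 : ℝ) ^ (b : ℕ) * ψ (σ ∘ b.succAbove))))]
  rw [Finset.sum_congr rfl (fun a _ => Finset.sum_congr rfl (fun b _ => aux_key X m φ ψ hφ hψ a b))]
  have hrow : ∀ a : Fin (k + 2), ∑ b : Fin (k + 2),
      (if a = b then SBp X m k φ ψ else - SAq X m k φ ψ)
        = SBp X m k φ ψ + ((k : ℝ) + 1) * (- SAq X m k φ ψ) := by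
    intro a
    have hpt : ∀ b : Fin (k + 2), (if a = b then SBp X m k φ ψ else - SAq X m k φ ψ)
        = - SAq X m k φ ψ + (if a = b then SBp X m k φ ψ + SAq X m k φ ψ else 0) := by
      intro b; split <;> ring
    rw [Finset.sum_congr rfl (fun b _ => hpt b), Finset.sum_add_distrib, Finset.sum_const,
      Finset.sum_ite_eq, if_pos (Finset.mem_univ a), Finset.card_univ, Fintype.card_fin,
      nsmul_eq_mul]
    push_cast; ring
  rw [Finset.sum_congr rfl (fun a _ => hrow a), Finset.sum_const, Finset.card_univ,
    Fintype.card_fin, nsmul_eq_mul]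
  push_cast
  field_simp
  ring


lemma aux_union_singleton (s : Finset V) (a : V) : s ∪ {a} = insert a s := by
  ext x; simp [or_comm]

lemma aux_reindex1 (F : (Fin 1 → V) → ℝ) :
    ∑ σ : Fin 1 → V, F σ = ∑ v : V, F ![v] := by
  refine Fintype.sum_equiv (Equiv.funUnique (Fin 1) V) _ _ (fun σ => congrArg F ?_)
  funext i
  rw [Subsingleton.elim i (0 : Fin 1)]
  show σ 0 = ![σ (default : Fin 1)] 0
  rw [Subsingleton.elim (default : Fin 1) (0 : Fin 1)]
  simp

lemma aux_reindex2 (F : (Fin 2 → V) → ℝ) :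
    ∑ σ : Fin 2 → V, F σ = ∑ u : V, ∑ v : V, F ![u, v] := by
  calc ∑ σ : Fin 2 → V, F σ
      = ∑ p : V × V, F ![p.1, p.2] :=
        Fintype.sum_equiv (finTwoArrowEquiv V) _ _ (fun σ => congrArg F (by
          funext i; fin_cases i <;> simp))
    _ = ∑ u : V, ∑ v : V, F ![u, v] := Fintype.sum_prod_type _

lemma aux_dloc {k : ℕ} (φ : (Fin (k + 1) → V) → ℝ) (τ : Fin k → V) (u v : V) :
    dOp (localize φ τ) ![u, v] = φ (Fin.snoc τ v) - φ (Fin.snoc τ u) := by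
  unfold SComplex.dOp SComplex.localize
  rw [Fin.sum_univ_two, Fin.append_right_eq_snoc, Fin.append_right_eq_snoc]
  have e0 : (0 : Fin 2).succAbove 0 = 1 := by decide
  have e1 : (1 : Fin 2).succAbove 0 = 0 := by decide
  simp [Function.comp, e0, e1]
  ring

lemma aux_inj2_iff (u v : V) : Function.Injective ![u, v] ↔ u ≠ v := by
  constructor
  · intro h he
    have h01 := h (a₁ := 0) (a₂ := 1) (by simp [he])
    exact absurd h01 (by decide)
  · intro h a b hab
    fin_cases a <;> fin_cases b <;> simp_all

lemma aux_K1 {j : ℕ} {τ : Fin j → V} (hτ : X.IsOSimp τ) (v : V) :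
    (X.link (Finset.image τ Finset.univ)).wt (linkWt m (Finset.image τ Finset.univ)) ![v]
      = X.wt m (Fin.snoc τ v) := by
  have him1 : Finset.image (![v] : Fin 1 → V) Finset.univ = {v} := by
    ext a
    rw [aux_mem_image]
    simp [Matrix.range_cons_empty]
  have himsnoc : Finset.image (Fin.snoc τ v : Fin (j + 1) → V) Finset.univ
      = insert v (Finset.image τ Finset.univ) := by
    rw [aux_image_congr (show Set.range (Fin.snoc τ v) = Set.range (Fin.cons v τ) by
      rw [aux_range_snoc, Fin.range_cons]), aux_image_cons]
  unfold SComplex.wt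
  by_cases hc : v ∉ Set.range τ ∧ insert v (Finset.image τ Finset.univ) ∈ X.faces
  · rw [if_pos, if_pos]
    · rw [himsnoc, him1]
      unfold SComplex.linkWt
      rw [aux_union_singleton]
    · exact ⟨(aux_inj_snoc τ v).mpr ⟨hc.1, hτ.1⟩, himsnoc ▸ hc.2⟩
    · refine ⟨Function.injective_of_subsingleton _, ?_⟩
      rw [him1]
      show _ ∈ insert ∅ _
      refine Finset.mem_insert.mpr (Or.inr (Finset.mem_filter.mpr ⟨?_, ?_, ?_⟩))
      · exact X.down_closed _ hc.2 _ (by simp)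
      · rw [Finset.disjoint_singleton_right, aux_mem_image]
        exact hc.1
      · rw [aux_union_singleton]
        exact hc.2
  · rw [if_neg, if_neg]
    · intro hoc
      obtain ⟨hi2, hf⟩ := hoc
      rw [aux_inj_snoc] at hi2
      exact hc ⟨hi2.1, himsnoc ▸ hf⟩
    · intro hoc
      obtain ⟨-, hf⟩ := hoc
      rw [him1] at hf
      replace hf : ({v} : Finset V) ∈ insert ∅ (X.faces.filter fun t =>
        Disjoint (Finset.image τ Finset.univ) t ∧ Finset.image τ Finset.univ ∪ t ∈ X.faces) := hf
      rcases Finset.mem_insert.mp hf with h | h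
      · exact absurd h (Finset.singleton_ne_empty v)
      · rw [Finset.mem_filter] at h
        obtain ⟨-, hdisj, hun⟩ := h
        rw [Finset.disjoint_singleton_right, aux_mem_image] at hdisj
        rw [aux_union_singleton] at hun
        exact hc ⟨hdisj, hun⟩

lemma aux_K2 {j : ℕ} {τ : Fin j → V} (hτ : X.IsOSimp τ) (u v : V) :
    (X.link (Finset.image τ Finset.univ)).wt (linkWt m (Finset.image τ Finset.univ)) ![u, v]
      = X.wt m (Fin.snoc (Fin.snoc τ u) v) := by
  set s := Finset.image τ Finset.univ with hs
  have him2 : Finset.image (![u, v] : Fin 2 → V) Finset.univ = {u, v} := by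
    ext a
    rw [aux_mem_image]
    simp [Matrix.range_cons_cons_empty]
    tauto
  have himss : Finset.image (Fin.snoc (Fin.snoc τ u) v : Fin (j + 2) → V) Finset.univ
      = insert v (insert u s) := by
    rw [aux_image_congr (show Set.range (Fin.snoc (Fin.snoc τ u) v)
        = Set.range (Fin.cons v (Fin.cons u τ)) by
      rw [aux_range_snoc, aux_range_snoc, Fin.range_cons, Fin.range_cons]),
      aux_image_cons, aux_image_cons, hs]
  have hsets : s ∪ {u, v} = insert v (insert u s) := by
    ext a; simp; tauto
  unfold SComplex.wt
  by_cases hc : u ≠ v ∧ u ∉ Set.range τ ∧ v ∉ Set.range τ ∧ insert v (insert u s) ∈ X.faces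
  · rw [if_pos, if_pos]
    · rw [himss, him2]
      unfold SComplex.linkWt
      rw [hsets]
    · refine ⟨?_, himss ▸ hc.2.2.2⟩
      rw [aux_inj_snoc, aux_inj_snoc, aux_range_snoc, Set.mem_insert_iff]
      exact ⟨by push_neg; exact ⟨hc.1.symm, hc.2.2.1⟩, hc.2.1, hτ.1⟩
    · refine ⟨(aux_inj2_iff u v).mpr hc.1, ?_⟩
      rw [him2]
      show _ ∈ insert ∅ _
      refine Finset.mem_insert.mpr (Or.inr (Finset.mem_filter.mpr ⟨?_, ?_, ?_⟩))
      · refine X.down_closed _ hc.2.2.2 _ ?_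
        intro a ha
        simp only [Finset.mem_insert, Finset.mem_singleton] at ha
        rcases ha with rfl | rfl
        · exact Finset.mem_insert_of_mem (Finset.mem_insert_self _ _)
        · exact Finset.mem_insert_self _ _
      · rw [Finset.disjoint_insert_right, Finset.disjoint_singleton_right, hs,
          aux_mem_image, aux_mem_image]
        exact ⟨hc.2.1, hc.2.2.1⟩
      · rw [hsets]
        exact hc.2.2.2
  · rw [if_neg, if_neg]
    · intro hoc
      obtain ⟨hi2, hf⟩ := hoc
      rw [aux_inj_snoc, aux_inj_snoc, aux_range_snoc, Set.mem_insert_iff] at hi2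
      push_neg at hi2
      exact hc ⟨hi2.1.1.symm, hi2.2.1, hi2.1.2, himss ▸ hf⟩
    · intro hoc
      obtain ⟨hinj, hf⟩ := hoc
      rw [aux_inj2_iff] at hinj
      rw [him2] at hf
      replace hf : ({u, v} : Finset V) ∈ insert ∅ (X.faces.filter fun t =>
        Disjoint s t ∧ s ∪ t ∈ X.faces) := hf
      rcases Finset.mem_insert.mp hf with h | h
      · exact absurd h (Finset.insert_ne_empty _ _)
      · rw [Finset.mem_filter] at h
        obtain ⟨-, hdisj, hun⟩ := h
        rw [Finset.disjoint_insert_right, Finset.disjoint_singleton_right, hs,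
          aux_mem_image, aux_mem_image] at hdisj
        rw [hsets] at hun
        exact hc ⟨hinj, hdisj.1, hdisj.2, hun⟩

lemma aux_I1 {k : ℕ} (φ ψ : (Fin (k + 1) → V) → ℝ) {τ : Fin k → V} (hτ : X.IsOSimp τ) :
    (X.link (Finset.image τ Finset.univ)).innerF (linkWt m (Finset.image τ Finset.univ)) 1
        (localize φ τ) (localize ψ τ)
      = ∑ v : V, X.wt m (Fin.snoc τ v) * (φ (Fin.snoc τ v) * ψ (Fin.snoc τ v)) := by
  unfold SComplex.innerF
  rw [aux_reindex1]
  refine Finset.sum_congr rfl (fun v _ => ?_)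
  unfold SComplex.localize
  rw [aux_K1 X m hτ v, Fin.append_right_eq_snoc]
  norm_num [Nat.factorial]

lemma aux_I2 {k : ℕ} (φ ψ : (Fin (k + 1) → V) → ℝ) {τ : Fin k → V} (hτ : X.IsOSimp τ) :
    (X.link (Finset.image τ Finset.univ)).innerF (linkWt m (Finset.image τ Finset.univ)) 2
        (dOp (localize φ τ)) (dOp (localize ψ τ))
      = ∑ u : V, ∑ v : V, X.wt m (Fin.snoc (Fin.snoc τ u) v) / 2 *
          ((φ (Fin.snoc τ v) - φ (Fin.snoc τ u)) * (ψ (Fin.snoc τ v) - ψ (Fin.snoc τ u))) := by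
  unfold SComplex.innerF
  rw [aux_reindex2]
  refine Finset.sum_congr rfl (fun u _ => Finset.sum_congr rfl (fun v _ => ?_))
  rw [aux_K2 X m hτ u v, aux_dloc, aux_dloc]
  norm_num [Nat.factorial]

lemma aux_symm {j : ℕ} (τ : Fin j → V) (a b : V → ℝ) :
    ∑ u : V, ∑ v : V, X.wt m (Fin.snoc (Fin.snoc τ u) v) / 2 * ((a v - a u) * (b v - b u))
      = ∑ u : V, ∑ v : V, X.wt m (Fin.snoc (Fin.snoc τ u) v) * (a v * b v - a u * b v) := by
  have hzero := aux_antisym_sum (fun u v =>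
    X.wt m (Fin.snoc (Fin.snoc τ u) v) / 2 * ((a v - a u) * (b v - b u))
      - X.wt m (Fin.snoc (Fin.snoc τ u) v) * (a v * b v - a u * b v)) (fun u v => by
    rw [aux_wt_swap X m τ v u]
    ring)
  simp only [Finset.sum_sub_distrib] at hzero
  linarith

lemma aux_rhs {k : ℕ} (φ ψ : (Fin (k + 1) → V) → ℝ)
    (hφ : X.IsForm (k + 1) φ) (hψ : X.IsForm (k + 1) ψ) :
    (X.sumOSimp k fun τ =>
        (X.link (Finset.image τ Finset.univ)).innerF
          (linkWt m (Finset.image τ Finset.univ)) 2 (dOp (localize φ τ)) (dOp (localize ψ τ)) -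
        (k : ℝ) / ((k : ℝ) + 1) *
          (X.link (Finset.image τ Finset.univ)).innerF
            (linkWt m (Finset.image τ Finset.univ)) 1 (localize φ τ) (localize ψ τ))
      = SBp X m k φ ψ - SAq X m k φ ψ
          - (k : ℝ) / ((k : ℝ) + 1) * SB0 X m k φ ψ := by
  unfold SComplex.sumOSimp
  have hpt : ∀ τ : Fin k → V,
      (if X.IsOSimp τ then
        (X.link (Finset.image τ Finset.univ)).innerF
          (linkWt m (Finset.image τ Finset.univ)) 2 (dOp (localize φ τ)) (dOp (localize ψ τ)) -
        (k : ℝ) / ((k : ℝ) + 1) *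
          (X.link (Finset.image τ Finset.univ)).innerF
            (linkWt m (Finset.image τ Finset.univ)) 1 (localize φ τ) (localize ψ τ)
       else 0)
      = (∑ u : V, ∑ v : V, X.wt m (Fin.snoc (Fin.snoc τ u) v) *
            (φ (Fin.snoc τ v) * ψ (Fin.snoc τ v)))
        - (∑ u : V, ∑ v : V, X.wt m (Fin.snoc (Fin.snoc τ u) v) *
            (φ (Fin.snoc τ u) * ψ (Fin.snoc τ v)))
        - (k : ℝ) / ((k : ℝ) + 1) *
            (∑ v : V, X.wt m (Fin.snoc τ v) * (φ (Fin.snoc τ v) * ψ (Fin.snoc τ v))) := by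
    intro τ
    by_cases hτ : X.IsOSimp τ
    · rw [if_pos hτ, aux_I2 X m φ ψ hτ, aux_symm, aux_I1 X m φ ψ hτ]
      simp only [mul_sub, Finset.sum_sub_distrib]
    · rw [if_neg hτ]
      have hW : ∀ u v : V, X.wt m (Fin.snoc (Fin.snoc τ u) v) = 0 := fun u v => by
        rw [aux_wt_ss]
        exact aux_wt_cons_zero X m (fun hcc => hτ (aux_osimp_cons X hcc)) v
      have hB : ∀ v : V, X.wt m (Fin.snoc τ v) = 0 := fun v => by
        rw [aux_wt_snoc]
        exact aux_wt_cons_zero X m hτ v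
      simp [hW, hB]
  rw [Finset.sum_congr rfl (fun τ _ => hpt τ)]
  simp only [Finset.sum_sub_distrib, ← Finset.mul_sum]
  have hD : ∑ τ : Fin k → V, ∑ u : V, ∑ v : V, X.wt m (Fin.snoc (Fin.snoc τ u) v) *
      (φ (Fin.snoc τ v) * ψ (Fin.snoc τ v)) = SBp X m k φ ψ := by
    have h1 : ∀ τ : Fin k → V, ∑ u : V, ∑ v : V, X.wt m (Fin.snoc (Fin.snoc τ u) v) *
        (φ (Fin.snoc τ v) * ψ (Fin.snoc τ v))
        = ∑ v : V, ∑ u : V, X.wt m (Fin.cons u (Fin.snoc τ v)) *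
            (φ (Fin.snoc τ v) * ψ (Fin.snoc τ v)) := by
      intro τ
      rw [Finset.sum_comm]
      exact Finset.sum_congr rfl (fun v _ => Finset.sum_congr rfl (fun u _ => by
        rw [aux_wt_cs]))
    rw [Finset.sum_congr rfl (fun τ _ => h1 τ)]
    unfold SBp
    rw [aux_reindex_snoc (fun η => ∑ u : V, X.wt m (Fin.cons u η) * (φ η * ψ η))]
  have hA : ∑ τ : Fin k → V, ∑ u : V, ∑ v : V, X.wt m (Fin.snoc (Fin.snoc τ u) v) *
      (φ (Fin.snoc τ u) * ψ (Fin.snoc τ v)) = SAq X m k φ ψ := by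
    unfold SAq
    refine Finset.sum_congr rfl (fun τ _ => Finset.sum_congr rfl (fun u _ =>
      Finset.sum_congr rfl (fun v _ => ?_)))
    rw [aux_wt_ss, aux_form_snoc X hφ, aux_form_snoc X hψ]
    have hsq : (-1 : ℝ) ^ k * (-1 : ℝ) ^ k = 1 := by
      rw [← pow_add]; exact Even.neg_one_pow ⟨k, rfl⟩
    linear_combination (X.wt m (Fin.cons v (Fin.cons u τ)) *
      (φ (Fin.cons u τ) * ψ (Fin.cons v τ))) * hsq
  have hB : ∑ τ : Fin k → V, ∑ v : V, X.wt m (Fin.snoc τ v) *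
      (φ (Fin.snoc τ v) * ψ (Fin.snoc τ v)) = SB0 X m k φ ψ := by
    unfold SB0
    rw [aux_reindex_snoc (fun η => X.wt m η * (φ η * ψ η))]
  rw [hD, hA, hB]

lemma aux_m3 {n k : ℕ} (hm : X.IsBalanced n m) (hk : k ≤ n - 1)
    (φ ψ : (Fin (k + 1) → V) → ℝ) (hφ : X.IsForm (k + 1) φ) :
    (k : ℝ) * SBp X m k φ ψ = (k : ℝ) * SB0 X m k φ ψ := by
  rcases Nat.eq_zero_or_pos k with rfl | hkpos
  · simp
  · have hn : k + 1 ≤ n := by omega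
    have heq : SBp X m k φ ψ = SB0 X m k φ ψ := by
      unfold SBp SB0
      refine Finset.sum_congr rfl (fun η _ => ?_)
      rw [← Finset.sum_mul]
      by_cases hη : X.IsOSimp η
      · rw [aux_sum_wt_cons X m hm hη hn]
      · rw [hφ.2 η hη]
        simp
    rw [heq]

end Aux

/-- Lemma 3.4: localization of the differential:
`k!⟨dφ,dψ⟩ = ∑_{τ∈Σ(k-1)} (⟨d_τφ_τ,d_τψ_τ⟩ - (k/(k+1))⟨φ_τ,ψ_τ⟩)`. -/
theorem localization_of_differential
    (X : SComplex V) (n : ℕ) (m : Finset V → ℝ)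
    (hpure : X.Pure n) (hm : X.IsBalanced n m)
    (k : ℕ) (hk : k ≤ n - 1)
    (φ ψ : (Fin (k + 1) → V) → ℝ) (hφ : X.IsForm (k + 1) φ) (hψ : X.IsForm (k + 1) ψ) :
    (Nat.factorial k : ℝ) * X.innerF m (k + 2) (dOp φ) (dOp ψ) =
      X.sumOSimp k fun τ =>
        (X.link (Finset.image τ Finset.univ)).innerF
          (linkWt m (Finset.image τ Finset.univ)) 2 (dOp (localize φ τ)) (dOp (localize ψ τ)) -
        (k : ℝ) / ((k : ℝ) + 1) *
          (X.link (Finset.image τ Finset.univ)).innerF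
            (linkWt m (Finset.image τ Finset.univ)) 1 (localize φ τ) (localize ψ τ) := by
  rw [aux_lhs X m φ ψ hφ hψ, aux_rhs X m φ ψ hφ hψ]
  have h3 := aux_m3 X m hm hk φ ψ hφ
  have hk1 : ((k : ℝ) + 1) ≠ 0 := by positivity
  field_simp
  linarith [h3]
end

section
/- Let X be a finite pure n-dimensional weighted simplicial complex. For every 0 ≤ k ≤ n−1, every φ, ψ ∈ C^k(X,ℝ), and every 0 ≤ l ≤ n−k−1: ⟨φ, ψ⟩ = Σ_{τ ∈ Σ(l)} ⟨φ^τ, ψ^τ⟩, where the inner products on the right-hand side are taken in the links X_τ. -/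
open Finset

variable {V : Type} [Fintype V] [DecidableEq V]

open SComplex
private lemma SCaux_step_sum (X : SComplex V) (n : ℕ) (m : Finset V → ℝ) (hm : X.IsBalanced n m)
    (s : Finset V) (hs : s ∈ X.faces) (hcard : s.card ≤ n) :
    m s = ∑ v : V, if v ∉ s ∧ insert v s ∈ X.faces then m (insert v s) else 0 := by
  rw [hm.2 s hs hcard, ← Finset.sum_filter]
  symm
  refine Finset.sum_bij (fun v _ => insert v s) ?_ ?_ ?_ ?_
  · intro v hv
    rw [Finset.mem_filter] at hv ⊢
    refine ⟨hv.2.2, Finset.subset_insert _ _, ?_⟩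
    rw [Finset.card_insert_of_notMem hv.2.1]
  · intro v hv w hw h
    rw [Finset.mem_filter] at hv hw
    by_contra hne
    have h' : insert v s = insert w s := h
    have : v ∈ insert w s := h' ▸ Finset.mem_insert_self v s
    rcases Finset.mem_insert.mp this with h' | h'
    · exact hne h'
    · exact hv.2.1 h'
  · intro t ht
    rw [Finset.mem_filter] at ht
    have hc : (t \ s).card = 1 := by
      rw [Finset.card_sdiff_of_subset ht.2.1, ht.2.2]; omega
    obtain ⟨v, hv⟩ := Finset.card_eq_one.mp hc
    have hvt : v ∈ t \ s := hv ▸ Finset.mem_singleton_self v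
    rw [Finset.mem_sdiff] at hvt
    have hts : t = insert v s := by
      have := Finset.union_sdiff_of_subset ht.2.1
      rw [hv] at this
      rw [← this, Finset.union_comm]
      rw [Finset.insert_eq]
    refine ⟨v, Finset.mem_filter.mpr ⟨Finset.mem_univ v, hvt.2, hts ▸ ht.1⟩, hts.symm⟩
  · intro v hv; rfl

private lemma SCaux_image_cons (v : V) {j : ℕ} (ρ : Fin j → V) :
    Finset.image (Fin.cons v ρ : Fin (j+1) → V) Finset.univ
      = insert v (Finset.image ρ Finset.univ) := by
  ext w
  simp [Finset.mem_image, Fin.exists_fin_succ, eq_comm]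

private lemma SCaux_iter_sum (X : SComplex V) (n : ℕ) (m : Finset V → ℝ) (hm : X.IsBalanced n m) :
    ∀ (l : ℕ) (s : Finset V), s ∈ X.faces → s.card + l ≤ n →
    m s = ∑ τ : Fin (l+1) → V,
      if Function.Injective τ ∧ Disjoint s (Finset.image τ Finset.univ) ∧
         s ∪ Finset.image τ Finset.univ ∈ X.faces
      then m (s ∪ Finset.image τ Finset.univ) else 0 := by
  intro l
  induction l with
  | zero =>
    intro s hs hcard
    rw [SCaux_step_sum X n m hm s hs (by omega)]
    rw [← Equiv.sum_comp (Equiv.funUnique (Fin 1) V).symm]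
    refine Finset.sum_congr rfl fun v _ => ?_
    have himg : Finset.image ((Equiv.funUnique (Fin 1) V).symm v) Finset.univ = {v} := by
      simp [Equiv.funUnique]
    rw [himg]
    have h1 : Function.Injective ((Equiv.funUnique (Fin 1) V).symm v) := by
      intro a b _; exact Subsingleton.elim a b
    have h2 : s ∪ {v} = insert v s := by
      rw [Finset.union_comm]; rw [Finset.insert_eq]
    rw [h2]
    simp only [h1, true_and, Finset.disjoint_singleton_right]
  | succ l ih =>
    intro s hs hcard
    rw [SCaux_step_sum X n m hm s hs (by omega)]
    rw [← Equiv.sum_comp (Fin.consEquiv (fun _ : Fin (l+2) => V))]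
    rw [Fintype.sum_prod_type]
    refine Finset.sum_congr rfl fun v _ => ?_
    by_cases hv : v ∉ s ∧ insert v s ∈ X.faces
    · rw [if_pos hv, ih (insert v s) hv.2 (by
        have := Finset.card_insert_le v s; omega)]
      refine Finset.sum_congr rfl fun ρ _ => ?_
      have hcons : (Fin.consEquiv (fun _ : Fin (l+2) => V)) (v, ρ) = Fin.cons v ρ := rfl
      rw [hcons, SCaux_image_cons]
      have hsets : insert v s ∪ Finset.image ρ Finset.univ
          = s ∪ insert v (Finset.image ρ Finset.univ) := by
        simp [Finset.insert_union, Finset.union_insert]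
      have hiff : (Function.Injective ρ ∧
            Disjoint (insert v s) (Finset.image ρ Finset.univ) ∧
            insert v s ∪ Finset.image ρ Finset.univ ∈ X.faces) ↔
          (Function.Injective (Fin.cons v ρ : Fin (l+2) → V) ∧
            Disjoint s (insert v (Finset.image ρ Finset.univ)) ∧
            s ∪ insert v (Finset.image ρ Finset.univ) ∈ X.faces) := by
        constructor
        · rintro ⟨hinj, hdisj, hface⟩
          have hvρ : v ∉ Set.range ρ := by
            intro ⟨i, hi⟩
            exact (Finset.disjoint_insert_left.mp hdisj).1
              (hi ▸ Finset.mem_image_of_mem ρ (Finset.mem_univ i))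
          refine ⟨Fin.cons_injective_iff.mpr ⟨hvρ, hinj⟩, ?_, hsets ▸ hface⟩
          rw [Finset.disjoint_insert_right]
          exact ⟨hv.1, (Finset.disjoint_insert_left.mp hdisj).2⟩
        · rintro ⟨hinj, hdisj, hface⟩
          obtain ⟨hvρ, hρ⟩ := Fin.cons_injective_iff.mp hinj
          refine ⟨hρ, ?_, hsets ▸ hface⟩
          rw [Finset.disjoint_insert_left]
          refine ⟨?_, (Finset.disjoint_insert_right.mp hdisj).2⟩
          intro h
          rcases Finset.mem_image.mp h with ⟨i, _, hi⟩
          exact hvρ ⟨i, hi⟩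
      by_cases hc : Function.Injective ρ ∧
          Disjoint (insert v s) (Finset.image ρ Finset.univ) ∧
          insert v s ∪ Finset.image ρ Finset.univ ∈ X.faces
      · rw [if_pos hc, if_pos (hiff.mp hc), hsets]
      · rw [if_neg hc, if_neg (fun h => hc (hiff.mpr h))]
    · rw [if_neg hv]
      symm
      refine Finset.sum_eq_zero fun ρ _ => ?_
      rw [if_neg]
      rintro ⟨hinj, hdisj, hface⟩
      have hcons : (Fin.consEquiv (fun _ : Fin (l+2) => V)) (v, ρ) = Fin.cons v ρ := rfl
      rw [hcons, SCaux_image_cons] at hdisj hface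
      apply hv
      constructor
      · exact (Finset.disjoint_insert_right.mp hdisj).1
      · exact X.down_closed _ hface _ (by
          intro w hw
          rcases Finset.mem_insert.mp hw with h | h
          · exact Finset.mem_union_right _ (Finset.mem_insert.mpr (Or.inl h))
          · exact Finset.mem_union_left _ h)

private lemma SCaux_key (X : SComplex V) (n : ℕ) (m : Finset V → ℝ) (hm : X.IsBalanced n m)
    (k l : ℕ) (hl : k + l + 1 ≤ n) (σ : Fin (k + 1) → V) (hσ : X.IsOSimp σ) :
    m (Finset.image σ Finset.univ) =
      ∑ τ : Fin (l + 1) → V,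
        if X.IsOSimp τ ∧ (X.link (Finset.image τ Finset.univ)).IsOSimp σ
        then m (Finset.image τ Finset.univ ∪ Finset.image σ Finset.univ) else 0 := by
  have hcardσ : (Finset.image σ Finset.univ).card = k + 1 := by
    rw [Finset.card_image_of_injective _ hσ.1, Finset.card_univ, Fintype.card_fin]
  rw [SCaux_iter_sum X n m hm l (Finset.image σ Finset.univ) hσ.2 (by omega)]
  refine Finset.sum_congr rfl fun τ _ => ?_
  have hne : Finset.image σ Finset.univ ≠ ∅ := by
    intro h
    have := hcardσ
    rw [h] at this
    simp at this
  have hiff : (Function.Injective τ ∧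
        Disjoint (Finset.image σ Finset.univ) (Finset.image τ Finset.univ) ∧
        Finset.image σ Finset.univ ∪ Finset.image τ Finset.univ ∈ X.faces) ↔
      (X.IsOSimp τ ∧ (X.link (Finset.image τ Finset.univ)).IsOSimp σ) := by
    constructor
    · rintro ⟨hinj, hdisj, hface⟩
      refine ⟨⟨hinj, X.down_closed _ hface _ Finset.subset_union_right⟩, hσ.1, ?_⟩
      refine Finset.mem_insert_of_mem (Finset.mem_filter.mpr ⟨hσ.2, hdisj.symm, ?_⟩)
      rwa [Finset.union_comm]
    · rintro ⟨hτ, hinjσ, hmem⟩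
      rcases Finset.mem_insert.mp hmem with h | h
      · exact absurd h hne
      · rw [Finset.mem_filter] at h
        exact ⟨hτ.1, h.2.1.symm, by rw [Finset.union_comm]; exact h.2.2⟩
  by_cases hc : Function.Injective τ ∧
      Disjoint (Finset.image σ Finset.univ) (Finset.image τ Finset.univ) ∧
      Finset.image σ Finset.univ ∪ Finset.image τ Finset.univ ∈ X.faces
  · rw [if_pos hc, if_pos (hiff.mp hc), Finset.union_comm]
  · rw [if_neg hc, if_neg fun h => hc (hiff.mpr h)]

/-- Lemma 3.12: restriction of the inner product:
`⟨φ,ψ⟩ = ∑_{τ∈Σ(l)} ⟨φ^τ,ψ^τ⟩`, the inner products on the right taken in the links. -/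
theorem restriction_of_inner_product
    (X : SComplex V) (n : ℕ) (m : Finset V → ℝ)
    (hpure : X.Pure n) (hm : X.IsBalanced n m)
    (k : ℕ) (hk : k ≤ n - 1) (l : ℕ) (hl : k + l + 1 ≤ n)
    (φ ψ : (Fin (k + 1) → V) → ℝ) (hφ : X.IsForm (k + 1) φ) (hψ : X.IsForm (k + 1) ψ) :
    X.innerF m (k + 1) φ ψ =
      X.sumOSimp (l + 1) fun τ =>
        (X.link (Finset.image τ Finset.univ)).innerF
          (linkWt m (Finset.image τ Finset.univ)) (k + 1)
          ((X.link (Finset.image τ Finset.univ)).restrict φ)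
          ((X.link (Finset.image τ Finset.univ)).restrict ψ) := by
  classical
  calc X.innerF m (k + 1) φ ψ
      = ∑ σ : Fin (k + 1) → V,
          (if X.IsOSimp σ then m (Finset.image σ Finset.univ) else 0) *
            (φ σ * ψ σ / ((k + 1).factorial : ℝ)) := by
        rw [SComplex.innerF]
        refine Finset.sum_congr rfl fun σ _ => ?_
        rw [SComplex.wt]
        ring
    _ = ∑ σ : Fin (k + 1) → V, ∑ τ : Fin (l + 1) → V,
          (if X.IsOSimp τ ∧ (X.link (Finset.image τ Finset.univ)).IsOSimp σ
           then m (Finset.image τ Finset.univ ∪ Finset.image σ Finset.univ) else 0) *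
            (φ σ * ψ σ / ((k + 1).factorial : ℝ)) := by
        refine Finset.sum_congr rfl fun σ _ => ?_
        rw [← Finset.sum_mul]
        by_cases hσ : X.IsOSimp σ
        · rw [if_pos hσ, ← SCaux_key X n m hm k l hl σ hσ]
        · rw [if_neg hσ, hφ.2 σ hσ]
          ring
    _ = ∑ τ : Fin (l + 1) → V, ∑ σ : Fin (k + 1) → V,
          (if X.IsOSimp τ ∧ (X.link (Finset.image τ Finset.univ)).IsOSimp σ
           then m (Finset.image τ Finset.univ ∪ Finset.image σ Finset.univ) else 0) *
            (φ σ * ψ σ / ((k + 1).factorial : ℝ)) := Finset.sum_comm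
    _ = _ := by
        rw [SComplex.sumOSimp]
        refine Finset.sum_congr rfl fun τ _ => ?_
        by_cases hτ : X.IsOSimp τ
        · rw [if_pos hτ, SComplex.innerF]
          refine Finset.sum_congr rfl fun σ _ => ?_
          simp only [SComplex.wt, SComplex.restrict, SComplex.linkWt]
          by_cases hσ : (X.link (Finset.image τ Finset.univ)).IsOSimp σ
          · rw [if_pos ⟨hτ, hσ⟩, if_pos hσ, if_pos hσ, if_pos hσ]
            ring
          · rw [if_neg fun h => hσ h.2, if_neg hσ, if_neg hσ, if_neg hσ]
            ring
        · rw [if_neg hτ]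
          exact Finset.sum_eq_zero fun σ _ => by rw [if_neg fun h => hτ h.1, zero_mul]
end

section
/- Let X be a finite pure n-dimensional weighted simplicial complex with n > 1. For every φ, ψ ∈ C^0(X,ℝ) and every 0 ≤ l ≤ n−2: ⟨dφ, dψ⟩ = Σ_{τ ∈ Σ(l)} ⟨d_τ φ^τ, d_τ ψ^τ⟩, where d_τ denotes the differential of the link X_τ and the inner products on the right-hand side are taken in X_τ. -/
open Finset

variable {V : Type} [Fintype V] [DecidableEq V]

open SComplex

set_option linter.unusedSectionVars false

section Aux

lemma image_cons {k : ℕ} (v : V) (τ : Fin k → V) :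
    Finset.image (Fin.cons v τ) Finset.univ = insert v (Finset.image τ Finset.univ) := by
  ext x
  simp only [Finset.mem_image, Finset.mem_univ, true_and, Finset.mem_insert]
  constructor
  · rintro ⟨i, rfl⟩
    rcases Fin.eq_zero_or_eq_succ i with rfl | ⟨j, rfl⟩
    · simp
    · exact Or.inr ⟨j, by simp⟩
  · rintro (rfl | ⟨j, rfl⟩)
    · exact ⟨0, by simp⟩
    · exact ⟨j.succ, by simp⟩

lemma image_comp_subset {j k : ℕ} (σ : Fin j → V) (g : Fin k → Fin j) :
    Finset.image (σ ∘ g) Finset.univ ⊆ Finset.image σ Finset.univ := by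
  intro y hy
  simp only [Finset.mem_image, Finset.mem_univ, true_and] at hy ⊢
  obtain ⟨x, rfl⟩ := hy
  exact ⟨g x, rfl⟩

/-- One step of the balance condition, indexed by vertices. -/
lemma balance_step (X : SComplex V) (n : ℕ) (m : Finset V → ℝ) (hm : X.IsBalanced n m)
    (s : Finset V) (hs : s ∈ X.faces) (hc : s.card ≤ n) :
    m s = ∑ v : V, if v ∉ s ∧ insert v s ∈ X.faces then m (insert v s) else 0 := by
  rw [hm.2 s hs hc, ← Finset.sum_filter]
  refine (Finset.sum_nbij (fun v => insert v s) ?_ ?_ ?_ ?_).symm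
  · intro v hv
    rw [Finset.mem_filter] at hv ⊢
    refine ⟨hv.2.2, Finset.subset_insert _ _, ?_⟩
    rw [Finset.card_insert_of_notMem hv.2.1]
  · intro u hu w hw h
    simp only [Finset.coe_filter, Set.mem_setOf_eq] at hu hw
    have h' : insert u s = insert w s := h
    have hu' : u ∈ insert w s := h' ▸ Finset.mem_insert_self u s
    rcases Finset.mem_insert.mp hu' with rfl | hus
    · rfl
    · exact absurd hus hu.2.1
  · intro t ht
    simp only [Finset.coe_filter, Set.mem_setOf_eq, Finset.mem_coe] at ht
    obtain ⟨htf, hst, hcard⟩ := ht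
    have : (t \ s).card = 1 := by
      rw [Finset.card_sdiff_of_subset hst, hcard]; omega
    obtain ⟨v, hv⟩ := Finset.card_eq_one.mp this
    have hvt : v ∈ t \ s := hv ▸ Finset.mem_singleton_self v
    rw [Finset.mem_sdiff] at hvt
    have htv : t = insert v s := by
      apply Finset.eq_of_subset_of_card_le
      · intro x hx
        by_cases hxs : x ∈ s
        · exact Finset.mem_insert_of_mem hxs
        · have : x ∈ t \ s := Finset.mem_sdiff.mpr ⟨hx, hxs⟩
          rw [hv, Finset.mem_singleton] at this
          exact this ▸ Finset.mem_insert_self _ _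
      · rw [hcard, Finset.card_insert_of_notMem hvt.2]
    refine ⟨v, ?_, htv.symm⟩
    simp only [Finset.coe_filter, Set.mem_setOf_eq, Finset.mem_coe, Finset.mem_univ, true_and]
    exact ⟨hvt.2, htv ▸ htf⟩
  · intro v hv; rfl

lemma cons_cond_iff (X : SComplex V) {k : ℕ} (e : Finset V)
    (v : V) (τ : Fin k → V) :
    (Function.Injective (Fin.cons v τ : Fin (k+1) → V) ∧
      Disjoint (Finset.image (Fin.cons v τ : Fin (k+1) → V) Finset.univ) e ∧
      Finset.image (Fin.cons v τ : Fin (k+1) → V) Finset.univ ∪ e ∈ X.faces) ↔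
    ((Function.Injective τ ∧ Disjoint (Finset.image τ Finset.univ) e ∧
        Finset.image τ Finset.univ ∪ e ∈ X.faces) ∧
      v ∉ Finset.image τ Finset.univ ∪ e ∧
        insert v (Finset.image τ Finset.univ ∪ e) ∈ X.faces) := by
  rw [image_cons, Fin.cons_injective_iff, Finset.insert_union]
  constructor
  · rintro ⟨⟨hvr, hinj⟩, hdisj, hface⟩
    have hve : v ∉ e := Finset.disjoint_left.mp hdisj (Finset.mem_insert_self _ _)
    have hd : Disjoint (Finset.image τ Finset.univ) e :=
      hdisj.mono_left (Finset.subset_insert _ _)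
    have hvi : v ∉ Finset.image τ Finset.univ := by
      simp only [Finset.mem_image, Finset.mem_univ, true_and]
      rintro ⟨i, hi⟩; exact hvr ⟨i, hi⟩
    refine ⟨⟨hinj, hd, X.down_closed _ hface _ (Finset.subset_insert _ _)⟩, ?_, hface⟩
    rw [Finset.mem_union]; rintro (h | h)
    · exact hvi h
    · exact hve h
  · rintro ⟨⟨hinj, hdisj, hface⟩, hvn, hface'⟩
    rw [Finset.mem_union] at hvn
    push_neg at hvn
    refine ⟨⟨?_, hinj⟩, ?_, hface'⟩
    · rintro ⟨i, hi⟩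
      exact hvn.1 (Finset.mem_image.mpr ⟨i, Finset.mem_univ _, hi⟩)
    · rw [Finset.insert_eq, Finset.disjoint_union_left]
      exact ⟨Finset.disjoint_singleton_left.mpr hvn.2, hdisj⟩

/-- Iterated balance condition, over ordered tuples of added vertices. -/
lemma balance_ordered (X : SComplex V) (n : ℕ) (m : Finset V → ℝ) (hm : X.IsBalanced n m) :
    ∀ (k : ℕ) (e : Finset V), e ∈ X.faces → e.card + k ≤ n + 1 →
    m e = ∑ τ : Fin k → V,
      if Function.Injective τ ∧ Disjoint (Finset.image τ Finset.univ) e ∧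
        Finset.image τ Finset.univ ∪ e ∈ X.faces
      then m (Finset.image τ Finset.univ ∪ e) else 0 := by
  intro k
  induction k with
  | zero =>
    intro e he _
    rw [Finset.univ_unique, Finset.sum_singleton]
    have h0 : Finset.image (default : Fin 0 → V) Finset.univ = (∅ : Finset V) := by simp
    rw [h0, Finset.empty_union, if_pos]
    exact ⟨Function.injective_of_subsingleton _, Finset.disjoint_empty_left e, he⟩
  | succ k ih =>
    intro e he hc
    rw [ih e he (by omega), ← Equiv.sum_comp (Fin.consEquiv fun _ => V), Fintype.sum_prod_type,
      Finset.sum_comm]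
    refine Finset.sum_congr rfl fun τ' _ => ?_
    have hce : ∀ (v : V) (ρ : Fin k → V),
        (Fin.consEquiv fun _ => V) (v, ρ) = Fin.cons v ρ := fun _ _ => rfl
    simp only [hce]
    by_cases hC : Function.Injective τ' ∧ Disjoint (Finset.image τ' Finset.univ) e ∧
        Finset.image τ' Finset.univ ∪ e ∈ X.faces
    · rw [if_pos hC]
      have hcard : (Finset.image τ' Finset.univ ∪ e).card ≤ n := by
        rw [Finset.card_union_of_disjoint hC.2.1, Finset.card_image_of_injective _ hC.1,
          Finset.card_univ, Fintype.card_fin]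
        omega
      rw [balance_step X n m hm _ hC.2.2 hcard]
      refine Finset.sum_congr rfl fun v _ => ?_
      by_cases hQ : v ∉ (Finset.image τ' Finset.univ ∪ e) ∧
          insert v (Finset.image τ' Finset.univ ∪ e) ∈ X.faces
      · rw [if_pos hQ, if_pos ((cons_cond_iff X e v τ').mpr ⟨hC, hQ⟩), image_cons,
          Finset.insert_union]
      · rw [if_neg hQ, if_neg (fun h => hQ ((cons_cond_iff X e v τ').mp h).2)]
    · rw [if_neg hC, Finset.sum_eq_zero]
      intro v _
      rw [if_neg]
      intro hcond
      exact hC ((cons_cond_iff X e v τ').mp hcond).1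

lemma ite_sum_zero {α : Type*} [Fintype α] (P : Prop) [Decidable P] (f : α → ℝ) :
    (if P then ∑ x, f x else 0) = ∑ x, if P then f x else 0 := by
  split <;> simp

lemma mem_link_faces_iff (X : SComplex V) (s t : Finset V) (ht : t.Nonempty) :
    t ∈ (X.link s).faces ↔ t ∈ X.faces ∧ Disjoint s t ∧ s ∪ t ∈ X.faces := by
  simp only [SComplex.link, Finset.mem_insert, Finset.mem_filter]
  constructor
  · rintro (rfl | h)
    · exact absurd rfl ht.ne_empty
    · exact ⟨h.1, h.2⟩
  · intro h; exact Or.inr ⟨h.1, h.2⟩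

lemma link_isOSimp_iff (X : SComplex V) (s : Finset V) (σ : Fin 2 → V) :
    (X.link s).IsOSimp σ ↔ X.IsOSimp σ ∧ Disjoint s (Finset.image σ Finset.univ) ∧
      s ∪ Finset.image σ Finset.univ ∈ X.faces := by
  have hne : (Finset.image σ Finset.univ).Nonempty :=
    ⟨σ 0, Finset.mem_image_of_mem σ (Finset.mem_univ 0)⟩
  unfold SComplex.IsOSimp
  rw [mem_link_faces_iff X s _ hne]
  tauto

lemma restrict_apply_of_mem (Y : SComplex V) (φ : (Fin 1 → V) → ℝ) (ρ : Fin 1 → V)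
    (h : Finset.image ρ Finset.univ ∈ Y.faces) : Y.restrict φ ρ = φ ρ := by
  simp only [SComplex.restrict]
  rw [if_pos ⟨Function.injective_of_subsingleton ρ, h⟩]

lemma dOp_restrict (Y : SComplex V) (φ : (Fin 1 → V) → ℝ) (σ : Fin 2 → V)
    (h : Y.IsOSimp σ) : SComplex.dOp (Y.restrict φ) σ = SComplex.dOp φ σ := by
  unfold SComplex.dOp
  refine Finset.sum_congr rfl fun i _ => ?_
  rw [restrict_apply_of_mem]
  exact Y.down_closed _ h.2 _ (image_comp_subset σ i.succAbove)

end Aux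

/-- Lemma 3.13: restriction of the differential of `0`-forms:
`⟨dφ,dψ⟩ = ∑_{τ∈Σ(l)} ⟨d_τφ^τ,d_τψ^τ⟩`, the inner products on the right taken in the links. -/
theorem restriction_of_differential
    (X : SComplex V) (n : ℕ) (m : Finset V → ℝ)
    (hn : 1 < n) (hpure : X.Pure n) (hm : X.IsBalanced n m)
    (l : ℕ) (hl : l + 2 ≤ n)
    (φ ψ : (Fin 1 → V) → ℝ) (hφ : X.IsForm 1 φ) (hψ : X.IsForm 1 ψ) :
    X.innerF m 2 (dOp φ) (dOp ψ) =
      X.sumOSimp (l + 1) fun τ =>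
        (X.link (Finset.image τ Finset.univ)).innerF
          (linkWt m (Finset.image τ Finset.univ)) 2
          (dOp ((X.link (Finset.image τ Finset.univ)).restrict φ))
          (dOp ((X.link (Finset.image τ Finset.univ)).restrict ψ)) := by
  classical
  have key : ∀ σ : Fin 2 → V,
      X.wt m σ / (Nat.factorial 2 : ℝ) * (dOp φ σ * dOp ψ σ) =
      ∑ τ : Fin (l + 1) → V, if X.IsOSimp τ then
        (X.link (Finset.image τ Finset.univ)).wt (linkWt m (Finset.image τ Finset.univ)) σ /
          (Nat.factorial 2 : ℝ) *
          (dOp ((X.link (Finset.image τ Finset.univ)).restrict φ) σ *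
           dOp ((X.link (Finset.image τ Finset.univ)).restrict ψ) σ) else 0 := by
    intro σ
    by_cases hσ : X.IsOSimp σ
    · have hwt : X.wt m σ = m (Finset.image σ Finset.univ) := by
        simp only [SComplex.wt]; rw [if_pos hσ]
      have hcard : (Finset.image σ Finset.univ).card = 2 := by
        rw [Finset.card_image_of_injective _ hσ.1, Finset.card_univ, Fintype.card_fin]
      have hbal := balance_ordered X n m hm (l + 1) (Finset.image σ Finset.univ) hσ.2
        (by omega)
      rw [hwt, hbal, Finset.sum_div, Finset.sum_mul]
      refine Finset.sum_congr rfl fun τ _ => ?_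
      by_cases hA : Function.Injective τ ∧
          Disjoint (Finset.image τ Finset.univ) (Finset.image σ Finset.univ) ∧
          Finset.image τ Finset.univ ∪ Finset.image σ Finset.univ ∈ X.faces
      · have hτ : X.IsOSimp τ :=
          ⟨hA.1, X.down_closed _ hA.2.2 _ Finset.subset_union_left⟩
        have hlσ : (X.link (Finset.image τ Finset.univ)).IsOSimp σ :=
          (link_isOSimp_iff X _ σ).mpr ⟨hσ, hA.2.1, hA.2.2⟩
        have hwl : (X.link (Finset.image τ Finset.univ)).wt
            (linkWt m (Finset.image τ Finset.univ)) σ =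
            m (Finset.image τ Finset.univ ∪ Finset.image σ Finset.univ) := by
          simp only [SComplex.wt]; rw [if_pos hlσ]; rfl
        rw [if_pos hA, if_pos hτ, hwl, dOp_restrict _ φ σ hlσ, dOp_restrict _ ψ σ hlσ]
      · rw [if_neg hA]
        by_cases hτ : X.IsOSimp τ
        · rw [if_pos hτ]
          have hwl : (X.link (Finset.image τ Finset.univ)).wt
              (linkWt m (Finset.image τ Finset.univ)) σ = 0 := by
            simp only [SComplex.wt]
            rw [if_neg]
            intro hlσ
            obtain ⟨hσ', hd, hu⟩ := (link_isOSimp_iff X _ σ).mp hlσ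
            exact hA ⟨hτ.1, hd, hu⟩
          rw [hwl]; ring
        · rw [if_neg hτ]; ring
    · have hwt : X.wt m σ = 0 := by simp only [SComplex.wt]; rw [if_neg hσ]
      rw [hwt]
      rw [Finset.sum_eq_zero]
      · ring
      intro τ _
      by_cases hτ : X.IsOSimp τ
      · rw [if_pos hτ]
        have hwl : (X.link (Finset.image τ Finset.univ)).wt
            (linkWt m (Finset.image τ Finset.univ)) σ = 0 := by
          simp only [SComplex.wt]
          rw [if_neg]
          intro hlσ
          exact hσ ((link_isOSimp_iff X _ σ).mp hlσ).1
        rw [hwl]; ring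
      · rw [if_neg hτ]
  unfold SComplex.innerF SComplex.sumOSimp
  simp only [_root_.ite_sum_zero]
  rw [Finset.sum_comm]
  exact Finset.sum_congr rfl fun σ _ => key σ
end
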